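/- Let k ≥ 2 and ℓ ≥ 1. Every digraph D with minimum out-degree δ⁺(D) ≥ k and digirth at least (k^ℓ − 1)/(k − 1) + 1 contains, for every chosen vertex u, a copy of S_k^{+(ℓ)} centred at u: k directed paths of length ℓ starting at u that are pairwise vertex-disjoint except at u. -/

import Mathlib

section AuxST

variable {V : Type}

/-- a prefix of a chain is a chain -/
lemma myChain_append_left {R : V → V → Prop} :
    ∀ (l₁ : List V) (a : V) (l₂ : List V), List.Chain R a (l₁ ++ l₂) → List.Chain R a l₁
  | [], _, _, _ => List.Chain.nil
  | x :: xs, a, l₂, h => by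
    rcases List.chain_cons.1 h with ⟨hax, h'⟩
    exact List.Chain.cons hax (myChain_append_left xs x l₂ h')

/-- a suffix of a chain starting at a designated member is a chain -/
lemma myChain_suffix {R : V → V → Prop} :
    ∀ (pre : List V) (a : V) (l : List V) (b : V) (post : List V),
      List.Chain R a l → l = pre ++ b :: post → List.Chain R b post
  | [], a, l, b, post, h, he => by subst he; exact (List.chain_cons.1 h).2
  | x :: xs, a, l, b, post, h, he => by
    subst he
    rcases List.chain_cons.1 h with ⟨_, h'⟩
    exact myChain_suffix xs x _ b post h' rfl

lemma myChain_take {R : V → V → Prop} :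
    ∀ (l : List V) (a : V) (n : ℕ), List.Chain R a l → List.Chain R a (l.take n)
  | [], _, _, _ => by simpa using List.Chain.nil
  | x :: xs, a, 0, _ => List.Chain.nil
  | x :: xs, a, n+1, h => by
    rcases List.chain_cons.1 h with ⟨hax, h'⟩
    exact List.Chain.cons hax (myChain_take xs x n h')

lemma myNot_nodup_split [DecidableEq V] :
    ∀ (l : List V), ¬ l.Nodup → ∃ (x : V) (s₁ s₂ s₃ : List V), l = s₁ ++ x :: s₂ ++ x :: s₃
  | [], h => absurd List.nodup_nil h
  | a :: rest, h => by
    by_cases ha : a ∈ rest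
    · obtain ⟨u₁, u₂, rfl⟩ := List.append_of_mem ha
      exact ⟨a, [], u₁, u₂, rfl⟩
    · have hrest : ¬ rest.Nodup := fun hn => h (List.nodup_cons.2 ⟨ha, hn⟩)
      obtain ⟨x, s₁, s₂, s₃, rfl⟩ := myNot_nodup_split rest hrest
      exact ⟨x, a :: s₁, s₂, s₃, rfl⟩

/-- From a closed walk inside `S` extract a genuine (Nodup) cycle inside `S`. -/
lemma myCyc_extract {A : V → V → Prop} [DecidableEq V] (S : Finset V) :
    ∀ (n : ℕ) (v : V) (l : List V), (v :: l).length ≤ n →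
      List.Chain A v (l ++ [v]) → (∀ x ∈ v :: l, x ∈ S) →
      ∃ (w : V) (m : List V), List.Chain A w (m ++ [w]) ∧ (w :: m).Nodup ∧
        ∀ x ∈ w :: m, x ∈ S := by
  intro n
  induction n with
  | zero => intro v l hlen; simp at hlen
  | succ n ih =>
    intro v l hlen hchain hmem
    by_cases hnd : (v :: l).Nodup
    · exact ⟨v, l, hchain, hnd, hmem⟩
    by_cases hv : v ∈ l
    · obtain ⟨s, t, rfl⟩ := List.append_of_mem hv
      have h1 : List.Chain A v ((s ++ [v]) ++ (t ++ [v])) := by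
        simpa using hchain
      have h2 := myChain_append_left (s ++ [v]) v (t ++ [v]) h1
      apply ih v s ?_ h2 ?_
      · simp only [List.length_cons, List.length_append] at hlen ⊢
        omega
      · intro x hx
        apply hmem
        rcases List.mem_cons.1 hx with rfl | hx'
        · exact List.mem_cons_self
        · exact List.mem_cons_of_mem _ (by simp [hx'])
    · have hnl : ¬ l.Nodup := fun h' => hnd (List.nodup_cons.2 ⟨hv, h'⟩)
      obtain ⟨x, s₁, s₂, s₃, rfl⟩ := myNot_nodup_split l hnl
      have h1 : List.Chain A x (s₂ ++ x :: (s₃ ++ [v])) := by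
        apply myChain_suffix s₁ v _ x (s₂ ++ x :: (s₃ ++ [v])) hchain
        simp
      have h2 : List.Chain A x ((s₂ ++ [x]) ++ (s₃ ++ [v])) := by
        apply myChain_append_left _ _ _ (by simpa using h1)
      have h3 := myChain_append_left (s₂ ++ [x]) x (s₃ ++ [v]) h2
      apply ih x s₂ ?_ h3 ?_
      · simp only [List.length_cons, List.length_append] at hlen ⊢
        omega
      · intro y hy
        apply hmem
        rcases List.mem_cons.1 hy with rfl | hy'
        · exact List.mem_cons_of_mem _ (by simp)
        · exact List.mem_cons_of_mem _ (by simp [hy'])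

/-- sources of a chain are in `S` whenever the step relation forces it -/
lemma myChain_dropLast_mem {P : V → V → Prop} {S : Finset V} (hP : ∀ a b, P a b → a ∈ S) :
    ∀ (l : List V) (a : V), List.Chain P a l → ∀ x ∈ (a :: l).dropLast, x ∈ S
  | [], a, _, x, hx => by simp at hx
  | b :: l, a, h, x, hx => by
    rcases List.chain_cons.1 h with ⟨hab, h'⟩
    have hdl : (a :: b :: l).dropLast = a :: (b :: l).dropLast := by
      simp
    rw [hdl] at hx
    rcases List.mem_cons.1 hx with rfl | hx'
    · exact hP _ _ hab
    · exact myChain_dropLast_mem hP l b h' x hx'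

end AuxST


section LemAST

variable {V : Type}

/-- Key combinatorial lemma: in a region `S` on which the children map strictly decreases
a rank `ρ` (i.e. `S` is acyclic for the children relation), any collection `R` of at most
`k` distinct start vertices admits pairwise disjoint "escape paths": each path starts at
its start vertex, follows children, stays in `S` except for its last vertex, which is
outside `S`. -/
lemma myLemA [DecidableEq V] (k : ℕ) (c : V → Fin k → V)
    (hcinj : ∀ v, Function.Injective (c v)) (ρ : V → ℕ) :
    ∀ (S : Finset V), (∀ v ∈ S, ∀ i, c v i ∈ S → ρ (c v i) < ρ v) →
    ∀ (R : Finset V), R.card ≤ k →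
    ∃ p : V → List V,
      (∀ r ∈ R, (p r).head? = some r) ∧
      (∀ r ∈ R, List.Chain' (fun x y => ∃ i, c x i = y) (p r)) ∧
      (∀ r ∈ R, ∀ x ∈ (p r).dropLast, x ∈ S) ∧
      (∀ r ∈ R, ∀ z, (p r).getLast? = some z → z ∉ S) ∧
      (∀ r ∈ R, ∀ r' ∈ R, r ≠ r' → ∀ x ∈ p r, x ∉ p r') := by
  intro S
  induction S using Finset.strongInduction with
  | _ S ih =>
    intro hρ R hR
    rcases S.eq_empty_or_nonempty with rfl | hne
    · refine ⟨fun r => [r], ?_, ?_, ?_, ?_, ?_⟩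
      · intro r _; rfl
      · intro r _; exact List.isChain_singleton r
      · intro r _ x hx; simp at hx
      · intro r _ z hz hzS; exact absurd hzS (Finset.notMem_empty z)
      · intro r _ r' _ hrr' x hx hx'
        simp only [List.mem_singleton] at hx hx'
        exact hrr' (hx ▸ hx' ▸ rfl)
    · obtain ⟨t, htS, htmin⟩ := S.exists_min_image ρ hne
      have hout : ∀ i, c t i ∉ S := fun i hin =>
        absurd (hρ t htS i hin) (not_lt.2 (htmin _ hin))
      have hSS : S.erase t ⊂ S := Finset.erase_ssubset htS
      have hρ' : ∀ v ∈ S.erase t, ∀ i, c v i ∈ S.erase t → ρ (c v i) < ρ v := fun v hv i hi =>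
        hρ v (Finset.mem_of_mem_erase hv) i (Finset.mem_of_mem_erase hi)
      obtain ⟨p, h1, h2, h3, h4, h5⟩ := ih _ hSS hρ' R hR
      have hpne : ∀ r ∈ R, p r ≠ [] := by
        intro r hr h
        have := h1 r hr; rw [h] at this; simp at this
      by_cases hex : ∃ r ∈ R, (p r).getLast? = some t
      · obtain ⟨r₀, hr₀, hlast₀⟩ := hex
        have hkpos : 1 ≤ k := le_trans (Finset.card_pos.2 ⟨r₀, hr₀⟩) hR
        set F : Finset V := (R.erase r₀).image (fun r => ((p r).getLast?).getD r) with hF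
        have hFcard : F.card ≤ k - 1 := by
          have h' := Finset.card_erase_of_mem hr₀
          exact le_trans Finset.card_image_le (by omega)
        have hex_i : ∃ i : Fin k, c t i ∉ F := by
          by_contra h
          push_neg at h
          have hsub : Finset.image (c t) Finset.univ ⊆ F := by
            intro y hy
            obtain ⟨i, _, rfl⟩ := Finset.mem_image.1 hy
            exact h i
          have hcard : (Finset.image (c t) Finset.univ).card = k := by
            rw [Finset.card_image_of_injective _ (hcinj t), Finset.card_univ, Fintype.card_fin]
          have := Finset.card_le_card hsub
          omega
        obtain ⟨i₀, hi₀⟩ := hex_i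
        have hynotS : c t i₀ ∉ S := hout i₀
        have hglast₀ : (p r₀).getLast (hpne r₀ hr₀) = t := by
          have := List.getLast?_eq_getLast (hpne r₀ hr₀)
          rw [this] at hlast₀
          exact Option.some.inj hlast₀
        have hmem₀ : ∀ x ∈ p r₀, x ∈ S := by
          intro x hx
          rw [← List.dropLast_append_getLast (hpne r₀ hr₀)] at hx
          rcases List.mem_append.1 hx with hx' | hx'
          · exact Finset.mem_of_mem_erase (h3 r₀ hr₀ x hx')
          · simp only [List.mem_singleton] at hx'
            rw [hx', hglast₀]; exact htS
        -- the last vertex of another path is never t, and never c t i₀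
        have hlast_ne : ∀ r ∈ R, r ≠ r₀ → ∀ z, (p r).getLast? = some z → z ∉ S ∧ z ≠ c t i₀ := by
          intro r hr hrne z hz
          constructor
          · intro hzS
            have hznt : z ≠ t := by
              intro h
              subst h
              have hzm : z ∈ p r := by
                have := List.getLast?_eq_getLast (hpne r hr)
                rw [this] at hz
                rw [← Option.some.inj hz]
                exact List.getLast_mem _
              have htm : z ∈ p r₀ := by
                have := List.getLast?_eq_getLast (hpne r₀ hr₀)
                rw [← hglast₀]
                exact List.getLast_mem _
              exact h5 r hr r₀ hr₀ hrne z hzm htm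
            exact h4 r hr z hz (Finset.mem_erase.2 ⟨hznt, hzS⟩)
          · intro h
            apply hi₀
            rw [← h]
            apply Finset.mem_image.2
            exact ⟨r, Finset.mem_erase.2 ⟨hrne, hr⟩, by rw [hz]; rfl⟩
        have hynotin : ∀ r ∈ R, r ≠ r₀ → c t i₀ ∉ p r := by
          intro r hr hrne hyin
          rw [← List.dropLast_append_getLast (hpne r hr)] at hyin
          rcases List.mem_append.1 hyin with hx' | hx'
          · exact hynotS (Finset.mem_of_mem_erase (h3 r hr _ hx'))
          · simp only [List.mem_singleton] at hx'
            have := hlast_ne r hr hrne _ (List.getLast?_eq_getLast (hpne r hr))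
            exact this.2 hx'.symm
        refine ⟨Function.update p r₀ (p r₀ ++ [c t i₀]), ?_, ?_, ?_, ?_, ?_⟩
        · intro r hr
          by_cases h : r = r₀
          · subst h
            rw [Function.update_self]
            cases hq : p r with
            | nil => exact absurd hq (hpne r hr)
            | cons a as =>
              have := h1 r hr; rw [hq] at this
              simpa using this
          · rw [Function.update_of_ne h]; exact h1 r hr
        · intro r hr
          by_cases h : r = r₀
          · subst h
            rw [Function.update_self]
            refine List.isChain_append.2 ⟨h2 r hr, List.isChain_singleton _, ?_⟩
            intro x hx y hy
            simp only [List.head?_cons, Option.mem_def, Option.some.injEq] at hy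
            rw [hlast₀] at hx
            simp only [Option.mem_def, Option.some.injEq] at hx
            exact ⟨i₀, by rw [← hx, ← hy]⟩
          · rw [Function.update_of_ne h]; exact h2 r hr
        · intro r hr x hx
          by_cases h : r = r₀
          · subst h
            rw [Function.update_self, List.dropLast_concat] at hx
            exact hmem₀ x hx
          · rw [Function.update_of_ne h] at hx
            exact Finset.mem_of_mem_erase (h3 r hr x hx)
        · intro r hr z hz
          by_cases h : r = r₀
          · subst h
            rw [Function.update_self, List.getLast?_concat] at hz
            rw [← Option.some.inj hz]
            exact hynotS
          · rw [Function.update_of_ne h] at hz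
            exact (hlast_ne r hr h z hz).1
        · intro r hr r' hr' hrr' x hx hx'
          by_cases h : r = r₀
          · subst h
            have h' : r' ≠ r := fun he => hrr' he.symm
            rw [Function.update_self] at hx
            rw [Function.update_of_ne h'] at hx'
            rcases List.mem_append.1 hx with hx0 | hx0
            · exact h5 r hr r' hr' hrr' x hx0 hx'
            · simp only [List.mem_singleton] at hx0
              subst hx0
              exact hynotin r' hr' h' hx'
          · rw [Function.update_of_ne h] at hx
            by_cases h' : r' = r₀
            · subst h'
              rw [Function.update_self] at hx'
              rcases List.mem_append.1 hx' with hx0 | hx0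
              · exact h5 r hr r' hr' hrr' x hx hx0
              · simp only [List.mem_singleton] at hx0
                subst hx0
                exact hynotin r hr h hx
            · rw [Function.update_of_ne h'] at hx'
              exact h5 r hr r' hr' hrr' x hx hx'
      · push_neg at hex
        refine ⟨p, h1, h2, ?_, ?_, h5⟩
        · intro r hr x hx
          exact Finset.mem_of_mem_erase (h3 r hr x hx)
        · intro r hr z hz hzS
          have hzt : z ≠ t := by
            intro h; subst h; exact hex r hr hz
          exact h4 r hr z hz (Finset.mem_erase.2 ⟨hzt, hzS⟩)

end LemAST


section MainAuxST

variable {V : Type}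

/-- last element of a deterministic chain starting in level `d` lies in level `d + len - 1`. -/
lemma myLastE [DecidableEq V] {k : ℕ} (c : V → Fin k → V) (E : ℕ → Finset V)
    (hEstep : ∀ d, ∀ v ∈ E d, ∀ i, c v i ∈ E (d+1)) :
    ∀ (q : List V) (a : V) (d : ℕ), q.head? = some a →
      List.Chain' (fun x y => ∃ i, c x i = y) q →
      a ∈ E d → ∀ z, q.getLast? = some z → z ∈ E (d + (q.length - 1))
  | [], a, d, h, _, _, z, _ => by simp at h
  | [b], a, d, h, _, ha, z, hz => by
    simp only [List.head?_cons, Option.some.injEq] at h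
    simp only [List.getLast?_singleton, Option.some.injEq] at hz
    subst h; subst hz
    simpa using ha
  | b :: b' :: q, a, d, h, hch, ha, z, hz => by
    simp only [List.head?_cons, Option.some.injEq] at h
    subst h
    rcases List.isChain_cons_cons.1 hch with ⟨⟨i, hi⟩, hch'⟩
    have hb' : b' ∈ E (d+1) := hi ▸ hEstep d b ha i
    have hz' : (b' :: q).getLast? = some z := by
      rw [← hz, List.getLast?_cons_cons]
    have hrec := myLastE c E hEstep (b' :: q) b' (d+1) rfl hch' hb' z hz'
    have harith : d + 1 + ((b' :: q).length - 1) = d + ((b :: b' :: q).length - 1) := by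
      simp only [List.length_cons]
      omega
    rwa [harith] at hrec

end MainAuxST




/-- A directed cycle of `A` within the set `s`, given by its first vertex `v`
and the list `l` of remaining vertices. Its length (number of vertices/arcs)
is `(v :: l).length`. -/
def IsCycleOn {V : Type} (A : V → V → Prop) (s : Set V) (v : V) (l : List V) : Prop :=
  (∀ x ∈ v :: l, x ∈ s) ∧ (v :: l).Nodup ∧ List.Chain A v (l ++ [v])

/-- `D[s]` admits a `k`-dicolouring: a colouring with no monochromatic directed cycle. -/
def DicolorableOn {V : Type} (A : V → V → Prop) (s : Set V) (k : ℕ) : Prop :=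
  ∃ φ : V → Fin k, ∀ v l, IsCycleOn A s v l → ¬ (∀ x ∈ v :: l, φ x = φ v)

/-- `D[s]` is `k`-dicritical: its dichromatic number is `k` (not `(k-1)`-dicolourable but
`k`-dicolourable) and removing any vertex or any arc makes it `(k-1)`-dicolourable. -/
def Dicritical {V : Type} (A : V → V → Prop) (s : Set V) (k : ℕ) : Prop :=
  ¬ DicolorableOn A s (k - 1) ∧ DicolorableOn A s k ∧
  (∀ v ∈ s, DicolorableOn A (s \ {v}) (k - 1)) ∧
  (∀ a b, a ∈ s → b ∈ s → A a b →
    DicolorableOn (fun x y => A x y ∧ ¬(x = a ∧ y = b)) s (k - 1))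

/-- The digraph `A` contains a copy of `S_k^{+(ℓ)}` centred at `u`: `k` directed paths of
length `ℓ` starting at `u` (given by their lists of `ℓ` vertices after `u`), pairwise
vertex-disjoint except at `u`. -/
def HasOutStar {V : Type} (A : V → V → Prop) (k ℓ : ℕ) (u : V) : Prop :=
  ∃ P : Fin k → List V,
    (∀ i, (P i).length = ℓ) ∧
    (∀ i, List.Chain A u (P i)) ∧
    (∀ i, (u :: P i).Nodup) ∧
    (∀ i j, i ≠ j → ∀ x ∈ P i, x ∉ P j)

/-- Let `k ≥ 2` and `ℓ ≥ 1`. Every digraph with minimum out-degree at least `k` and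
digirth at least `(k^ℓ - 1)/(k - 1) + 1` contains, for every chosen vertex `u`, a copy
of `S_k^{+(ℓ)}` centred at `u`. -/
theorem stmt14'  (k ℓ : ℕ) (hk : 2 ≤ k) (hl : 1 ≤ ℓ)
    {V : Type} [Fintype V] (A : V → V → Prop)
    (hdeg : ∀ v, k ≤ Nat.card {w // A v w})
    (hgirth : ∀ v l', IsCycleOn A Set.univ v l' →
      (k ^ ℓ - 1) / (k - 1) + 1 ≤ (v :: l').length) :
    ∀ u, HasOutStar A k ℓ u := by
  intro u
  classical
  -- a system of `k` distinct out-neighbours for every vertex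
  have hcex : ∀ v : V, ∃ f : Fin k → V, Function.Injective f ∧ ∀ i, A v (f i) := by
    intro v
    haveI : Fintype {w // A v w} := Fintype.ofFinite _
    have hcard : Fintype.card (Fin k) ≤ Fintype.card {w // A v w} := by
      rw [Fintype.card_fin]
      have := hdeg v
      rwa [Nat.card_eq_fintype_card] at this
    obtain ⟨e⟩ := Function.Embedding.nonempty_of_card_le hcard
    exact ⟨fun i => (e i).1, fun a b h => e.injective (Subtype.ext h), fun i => (e i).2⟩
  choose c hcinj hA using hcex
  -- levels of the ball around u
  let E : ℕ → Finset V := fun d =>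
    Nat.rec {u} (fun _ Ed => Ed.biUnion fun v => Finset.image (c v) Finset.univ) d
  have hE0 : E 0 = {u} := rfl
  have hEsucc : ∀ d, E (d+1) = (E d).biUnion fun v => Finset.image (c v) Finset.univ :=
    fun d => rfl
  have hEstep : ∀ d, ∀ v ∈ E d, ∀ i, c v i ∈ E (d+1) := by
    intro d v hv i
    rw [hEsucc]
    exact Finset.mem_biUnion.2 ⟨v, hv, Finset.mem_image.2 ⟨i, Finset.mem_univ i, rfl⟩⟩
  have hEcard : ∀ d, (E d).card ≤ k ^ d := by
    intro d; induction d with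
    | zero => simp [hE0]
    | succ d ihd =>
      rw [hEsucc]
      calc ((E d).biUnion fun v => Finset.image (c v) Finset.univ).card
          ≤ ∑ v ∈ E d, (Finset.image (c v) Finset.univ).card := Finset.card_biUnion_le
        _ ≤ ∑ v ∈ E d, k := Finset.sum_le_sum fun v _ =>
            le_trans Finset.card_image_le (by simp)
        _ = (E d).card * k := by rw [Finset.sum_const, smul_eq_mul]
        _ ≤ k ^ d * k := Nat.mul_le_mul_right k ihd
        _ = k ^ (d+1) := by ring
  set S : Finset V := (Finset.range ℓ).biUnion E with hSdef
  have hScard : S.card ≤ ∑ d ∈ Finset.range ℓ, k ^ d :=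
    le_trans Finset.card_biUnion_le (Finset.sum_le_sum fun d _ => hEcard d)
  have huS : u ∈ S :=
    Finset.mem_biUnion.2 ⟨0, Finset.mem_range.2 (by omega), by rw [hE0]; exact Finset.mem_singleton_self u⟩
  -- the geometric sum identity
  have hgeo : ∀ n : ℕ, (∑ d ∈ Finset.range n, k ^ d) * (k - 1) + 1 = k ^ n := by
    intro n; induction n with
    | zero => simp
    | succ n ihn =>
      have h1 : 1 + (k - 1) = k := by omega
      calc (∑ d ∈ Finset.range (n+1), k ^ d) * (k-1) + 1
          = ((∑ d ∈ Finset.range n, k ^ d) * (k-1) + 1) + k ^ n * (k-1) := by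
            rw [Finset.sum_range_succ]; ring
        _ = k ^ n * 1 + k ^ n * (k-1) := by rw [ihn]; ring
        _ = k ^ n * (1 + (k-1)) := by ring
        _ = k ^ (n+1) := by rw [h1]; ring
  have hdiv : (k ^ ℓ - 1) / (k - 1) = ∑ d ∈ Finset.range ℓ, k ^ d := by
    have h := hgeo ℓ
    generalize hP : k ^ ℓ = P at h ⊢
    generalize hX : (∑ d ∈ Finset.range ℓ, k ^ d) = X at h ⊢
    generalize hQ : X * (k - 1) = Q at h
    have h2 : P - 1 = Q := by omega
    rw [h2, ← hQ, Nat.mul_div_cancel _ (show 0 < k - 1 by omega)]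
  -- no closed walk inside S
  have hnc : ∀ (v : V) (m : List V), List.Chain A v (m ++ [v]) →
      (∀ x ∈ v :: m, x ∈ S) → False := by
    intro v m hchain hmem
    obtain ⟨w, m', hch, hnd, hm⟩ := myCyc_extract S ((v :: m).length) v m le_rfl hchain hmem
    have hcyc : IsCycleOn A Set.univ w m' := ⟨fun x _ => Set.mem_univ x, hnd, hch⟩
    have hg := hgirth w m' hcyc
    rw [hdiv] at hg
    have hlen : (w :: m').length ≤ S.card := by
      rw [← List.toFinset_card_of_nodup hnd]
      apply Finset.card_le_card
      intro x hx
      exact hm x (List.mem_toFinset.1 hx)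
    omega
  -- rank function
  set stepS : V → V → Prop := fun x y => x ∈ S ∧ ∃ i, c x i = y with hstepS
  set ρ : V → ℕ := fun v => (S.filter fun w => Relation.ReflTransGen stepS v w).card with hρdef
  have hρ : ∀ v ∈ S, ∀ i, c v i ∈ S → ρ (c v i) < ρ v := by
    intro v hv i hci
    apply Finset.card_lt_card
    rw [Finset.ssubset_def]
    constructor
    · intro w hw
      rw [Finset.mem_filter] at hw ⊢
      exact ⟨hw.1, Relation.ReflTransGen.head ⟨hv, i, rfl⟩ hw.2⟩
    · intro hsub
      have hvmem : v ∈ S.filter fun w => Relation.ReflTransGen stepS v w :=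
        Finset.mem_filter.2 ⟨hv, Relation.ReflTransGen.refl⟩
      have hvy := hsub hvmem
      rw [Finset.mem_filter] at hvy
      obtain ⟨l, hchain, hlast⟩ := List.exists_isChain_cons_of_relationReflTransGen hvy.2
      have hchainA : List.Chain A v (c v i :: l) := by
        refine List.Chain.cons (hA v i) (List.Chain.imp ?_ hchain)
        intro a b hab
        obtain ⟨_, j, hj⟩ := hab
        exact hj ▸ hA a j
      have hy_l : (c v i :: l) = (c v i :: l).dropLast ++ [v] := by
        conv_lhs => rw [← List.dropLast_append_getLast (l := c v i :: l) (List.cons_ne_nil _ _)]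
        rw [hlast]
      apply hnc v ((c v i :: l).dropLast) (by rw [← hy_l]; exact hchainA)
      intro x hx
      rcases List.mem_cons.1 hx with rfl | hx'
      · exact hv
      · exact myChain_dropLast_mem (fun a b hab => hab.1) l (c v i) hchain x hx'
  -- apply the escape-path lemma
  set R : Finset V := Finset.image (fun i => c u i) Finset.univ with hRdef
  have hRcard : R.card ≤ k := le_trans Finset.card_image_le (by simp)
  have hRmem : ∀ i : Fin k, c u i ∈ R :=
    fun i => Finset.mem_image.2 ⟨i, Finset.mem_univ i, rfl⟩
  obtain ⟨p, h1, h2, h3, h4, h5⟩ := myLemA k c hcinj ρ S hρ R hRcard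
  have hpne : ∀ i : Fin k, p (c u i) ≠ [] := by
    intro i h
    have := h1 _ (hRmem i); rw [h] at this; simp at this
  -- every escape path has length at least ℓ
  have hlen : ∀ i : Fin k, ℓ ≤ (p (c u i)).length := by
    intro i
    obtain ⟨z, hz⟩ : ∃ z, (p (c u i)).getLast? = some z :=
      ⟨(p (c u i)).getLast (hpne i), List.getLast?_eq_getLast (hpne i)⟩
    have hzE : z ∈ E (1 + ((p (c u i)).length - 1)) :=
      myLastE c E hEstep (p (c u i)) (c u i) 1 (h1 _ (hRmem i)) (h2 _ (hRmem i))
        (hEstep 0 u (by rw [hE0]; exact Finset.mem_singleton_self u) i) z hz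
    by_contra hcon
    push_neg at hcon
    have hpos : 1 ≤ (p (c u i)).length := List.length_pos_iff.2 (hpne i)
    have hzS : z ∈ S :=
      Finset.mem_biUnion.2 ⟨1 + ((p (c u i)).length - 1),
        Finset.mem_range.2 (by omega), hzE⟩
    exact h4 _ (hRmem i) z hz hzS
  -- combined chain with strictly decreasing modified rank
  set ρ' : V → ℕ := fun v => if v ∈ S then ρ v + 1 else 0 with hρ'def
  have hcomb : ∀ (q : List V), List.Chain' (fun x y => ∃ i, c x i = y) q →
      (∀ x ∈ q.dropLast, x ∈ S) →
      List.Chain' (fun x y => A x y ∧ ρ' y < ρ' x) q := by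
    intro q
    induction q with
    | nil => intro _ _; exact List.isChain_nil
    | cons b q ihq =>
      intro hch hm
      cases q with
      | nil => exact List.isChain_singleton b
      | cons b' q' =>
        rcases List.isChain_cons_cons.1 hch with ⟨⟨i, hi⟩, hch'⟩
        have hbS : b ∈ S := hm b (by simp)
        refine List.isChain_cons_cons.2 ⟨⟨hi ▸ hA b i, ?_⟩, ihq hch' ?_⟩
        · have hlt : ∀ y, c b i = y → ρ' y < ρ' b := by
            intro y hy
            by_cases hyS : y ∈ S
            · have := hρ b hbS i (hy ▸ hyS)
              rw [hy] at this
              simp only [hρ'def, if_pos hyS, if_pos hbS]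
              omega
            · simp only [hρ'def, if_neg hyS, if_pos hbS]
              omega
          exact hlt b' hi
        · intro x hx
          apply hm
          simp only [List.dropLast_cons₂, List.mem_cons]
          right; exact hx
  have hchainfull : ∀ i : Fin k,
      List.Chain (fun x y => A x y ∧ ρ' y < ρ' x) u (p (c u i)) := by
    intro i
    have hch' := hcomb (p (c u i)) (h2 _ (hRmem i)) (fun x hx => h3 _ (hRmem i) x hx)
    obtain ⟨rest, hq⟩ : ∃ rest, p (c u i) = (c u i) :: rest := by
      cases hq : p (c u i) with
      | nil => exact absurd hq (hpne i)
      | cons a as =>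
        have := h1 _ (hRmem i); rw [hq] at this
        simp only [List.head?_cons, Option.some.injEq] at this
        exact ⟨as, by rw [this]⟩
    rw [hq]
    rw [hq] at hch'
    refine List.chain_cons.2 ⟨⟨hA u i, ?_⟩, hch'⟩
    by_cases hrS : c u i ∈ S
    · have := hρ u huS i hrS
      simp only [hρ'def, if_pos hrS, if_pos huS]
      omega
    · simp only [hρ'def, if_neg hrS, if_pos huS]
      omega
  -- assemble the star
  refine ⟨fun i => (p (c u i)).take ℓ, ?_, ?_, ?_, ?_⟩
  · intro i
    rw [List.length_take]
    exact min_eq_left (hlen i)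
  · intro i
    exact List.Chain.imp (fun a b hab => hab.1) (myChain_take _ u ℓ (hchainfull i))
  · intro i
    have hchain : List.Chain (fun x y => ρ' y < ρ' x) u ((p (c u i)).take ℓ) :=
      List.Chain.imp (fun a b hab => hab.2) (myChain_take _ u ℓ (hchainfull i))
    haveI : IsTrans V (fun x y => ρ' y < ρ' x) := ⟨fun a b c' hab hbc => lt_trans hbc hab⟩
    have hpw := List.isChain_iff_pairwise.1 hchain
    exact hpw.imp fun {a b} hab => by rintro rfl; exact lt_irrefl _ hab
  · intro i j hij x hx hx'
    have hne : c u i ≠ c u j := fun he => hij (hcinj u he)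
    exact h5 _ (hRmem i) _ (hRmem j) hne x (List.take_subset _ _ hx)
      (List.take_subset _ _ hx')

theorem stmt14 (k ℓ : ℕ) (hk : 2 ≤ k) (hl : 1 ≤ ℓ)
    {V : Type} [Fintype V] (A : V → V → Prop)
    (hdeg : ∀ v, k ≤ Nat.card {w // A v w})
    (hgirth : ∀ v l', IsCycleOn A Set.univ v l' →
      (k ^ ℓ - 1) / (k - 1) + 1 ≤ (v :: l').length) :
    ∀ u, HasOutStar A k ℓ u := stmt14' k ℓ hk hl A hdeg hgirth
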